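/- Let J : ℝ^d → ℝ be twice continuously differentiable with L₃-Lipschitz Hessian, θ ∈ ℝ^d, g ∈ ℝ^d, H symmetric, and M ≥ L₃. Suppose ‖g - ∇J(θ)‖ ≤ ε and ‖H - ∇²J(θ)‖ ≤ √(L₃ε). Let h be a global minimizer of m(v) = gᵀv + (1/2)vᵀHv + (M/6)‖v‖³ with M = 30L₃ and ‖h‖ > (1/2)√(ε/L₃). Then J(θ) - J(θ + h) > (7/24)·L₃^{-1/2}·ε^{3/2}. -/

import Mathlib

open scoped RealInnerProductSpace

private lemma aux_rhs (x y : ℝ) (hx : 0 < x) :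
    (7 / 24 : ℝ) * (x * y ^ 2 * (Real.sqrt x * y)) / Real.sqrt x = 7 / 24 * (x * y ^ 3) := by
  have hs : Real.sqrt x ≠ 0 := by positivity
  field_simp

set_option maxHeartbeats 1000000

theorem descent_in_large_step_regime (d : ℕ) (hd : 0 < d) (ε L₃ : ℝ)
    (hε : 0 < ε) (hL : 0 < L₃)
    (J : EuclideanSpace ℝ (Fin d) → ℝ) (hJ : ContDiff ℝ 2 J)
    (Hess : EuclideanSpace ℝ (Fin d) →
      EuclideanSpace ℝ (Fin d) →L[ℝ] EuclideanSpace ℝ (Fin d))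
    (hHess : ∀ x, HasFDerivAt (gradient J) (Hess x) x)
    (hLip : ∀ x y, ‖Hess x - Hess y‖ ≤ L₃ * ‖x - y‖)
    (θ g : EuclideanSpace ℝ (Fin d))
    (H : EuclideanSpace ℝ (Fin d) →L[ℝ] EuclideanSpace ℝ (Fin d))
    (hHsym : IsSelfAdjoint H) (M : ℝ) (hML : M ≥ L₃) (hM : M = 30 * L₃)
    (hg : ‖g - gradient J θ‖ ≤ ε)
    (hHerr : ‖H - Hess θ‖ ≤ Real.sqrt (L₃ * ε))
    (h : EuclideanSpace ℝ (Fin d))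
    (hmin : ∀ v : EuclideanSpace ℝ (Fin d),
      ⟪g, h⟫ + (1 / 2) * ⟪h, H h⟫ + (M / 6) * ‖h‖ ^ 3
        ≤ ⟪g, v⟫ + (1 / 2) * ⟪v, H v⟫ + (M / 6) * ‖v‖ ^ 3)
    (hlarge : ‖h‖ > (1 / 2) * Real.sqrt (ε / L₃)) :
    J θ - J (θ + h) > (7 / 24) * ε ^ ((3 : ℝ) / 2) / Real.sqrt L₃ := by
  set r := ‖h‖ with hrdef
  set s := Real.sqrt (ε / L₃) with hsdef
  have hs0 : 0 < s := Real.sqrt_pos.2 (div_pos hε hL)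
  have hr0 : 0 < r := lt_trans (by linarith) hlarge
  set a := ⟪g, h⟫ with hadef
  set b := ⟪h, H h⟫ with hbdef
  set c := M / 6 * r ^ 3 with hcdef
  -- a ≤ 0, from minimality at -h
  have hA : a ≤ 0 := by
    have hm := hmin (-h)
    rw [inner_neg_right, map_neg, inner_neg_neg, norm_neg] at hm
    linarith
  -- stationarity along the ray: a + b + 3c = 0
  have hstat : a + b + 3 * c = 0 := by
    have hloc : IsLocalMin (fun t : ℝ => a * t + b / 2 * t ^ 2 + c * t ^ 3) 1 := by
      filter_upwards [Ioi_mem_nhds (zero_lt_one)] with t ht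
      have hm := hmin (t • h)
      rw [real_inner_smul_right, map_smul, inner_smul_left, real_inner_smul_right,
        norm_smul, Real.norm_eq_abs] at hm
      simp only [RCLike.conj_to_real] at hm
      rw [abs_of_pos (Set.mem_Ioi.1 ht), ← hadef, ← hbdef] at hm
      have key : a + b / 2 + c ≤ a * t + b / 2 * t ^ 2 + c * t ^ 3 := by
        rw [hcdef] at hm ⊢; nlinarith [hm]
      simpa using key
    have hder : HasDerivAt (fun t : ℝ => a * t + b / 2 * t ^ 2 + c * t ^ 3)
        (a + b + 3 * c) 1 := by
      have h1 : HasDerivAt (fun t : ℝ => a * t) a 1 := by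
        simpa using (hasDerivAt_id (1:ℝ)).const_mul a
      have h2 : HasDerivAt (fun t : ℝ => b / 2 * t ^ 2) b 1 := by
        convert (hasDerivAt_pow 2 (1:ℝ)).const_mul (b / 2) using 1
        all_goals try rfl
        push_cast; ring
      have h3 : HasDerivAt (fun t : ℝ => c * t ^ 3) (3 * c) 1 := by
        convert (hasDerivAt_pow 3 (1:ℝ)).const_mul c using 1
        all_goals try rfl
        push_cast; ring
      exact (h1.add h2).add h3
    have := hloc.deriv_eq_zero
    rwa [hder.deriv] at this
  have hab : a + b / 2 ≤ -(M / 4) * r ^ 3 := by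
    have hM0 : 0 < M := lt_of_lt_of_le hL hML
    have hc0 : 0 ≤ c := by
      rw [hcdef]; exact mul_nonneg (by linarith) (by positivity)
    nlinarith [hstat, hA]
  -- Taylor expansion machinery
  have hJd : Differentiable ℝ J := hJ.differentiable two_ne_zero
  set γ : ℝ → EuclideanSpace ℝ (Fin d) := fun t => θ + t • h with hγdef
  have hγ : ∀ t, HasDerivAt γ h t := fun t => by
    simpa [hγdef] using ((hasDerivAt_id t).smul_const h).const_add θ
  have hγ0 : γ 0 = θ := by simp [hγdef]
  have hγ1 : γ 1 = θ + h := by simp [hγdef]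
  have hφ : ∀ t, HasDerivAt (fun t => J (γ t)) ⟪gradient J (γ t), h⟫ t := fun t => by
    have hf : HasFDerivAt J (InnerProductSpace.toDual ℝ _ (gradient J (γ t))) (γ t) :=
      hasGradientAt_iff_hasFDerivAt.1 (hJd (γ t)).hasGradientAt
    have := hf.comp_hasDerivAt t (hγ t)
    exact this
  have hφ1 : ∀ t, HasDerivAt (fun t => ⟪gradient J (γ t), h⟫) ⟪Hess (γ t) h, h⟫ t := fun t => by
    have h1 : HasDerivAt (fun t => gradient J (γ t)) (Hess (γ t) h) t :=
      (hHess (γ t)).comp_hasDerivAt t (hγ t)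
    simpa using h1.inner ℝ (hasDerivAt_const t h)
  set K := L₃ * r ^ 3 with hKdef
  have hLipφ2 : ∀ t : ℝ, 0 ≤ t → ⟪Hess (γ t) h, h⟫ - ⟪Hess θ h, h⟫ ≤ K * t := by
    intro t ht
    have h1 : ⟪Hess (γ t) h, h⟫ - ⟪Hess θ h, h⟫ = ⟪(Hess (γ t) - Hess θ) h, h⟫ := by
      rw [ContinuousLinearMap.sub_apply, inner_sub_left]
    have hnorm : ‖γ t - θ‖ = t * r := by
      have : γ t - θ = t • h := by simp [hγdef]
      rw [this, norm_smul, Real.norm_eq_abs, abs_of_nonneg ht]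
    rw [h1]
    calc ⟪(Hess (γ t) - Hess θ) h, h⟫ ≤ ‖(Hess (γ t) - Hess θ) h‖ * ‖h‖ :=
          real_inner_le_norm _ _
      _ ≤ ‖Hess (γ t) - Hess θ‖ * ‖h‖ * ‖h‖ := by
          gcongr; exact (Hess (γ t) - Hess θ).le_opNorm h
      _ ≤ L₃ * ‖γ t - θ‖ * ‖h‖ * ‖h‖ := by gcongr; exact hLip _ _
      _ = K * t := by rw [hnorm, hKdef]; ring
  -- first antitone step
  have hstep1 : ∀ t ∈ Set.Icc (0:ℝ) 1,
      ⟪gradient J (γ t), h⟫ ≤ ⟪gradient J θ, h⟫ + t * ⟪Hess θ h, h⟫ + K / 2 * t ^ 2 := by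
    set χ : ℝ → ℝ := fun t => ⟪gradient J (γ t), h⟫ - t * ⟪Hess θ h, h⟫ - K / 2 * t ^ 2
      with hχdef
    have hχd : ∀ t, HasDerivAt χ (⟪Hess (γ t) h, h⟫ - ⟪Hess θ h, h⟫ - K * t) t := by
      intro t
      have h2 : HasDerivAt (fun t : ℝ => t * ⟪Hess θ h, h⟫) ⟪Hess θ h, h⟫ t := by
        simpa using (hasDerivAt_id t).mul_const ⟪Hess θ h, h⟫
      have h3 : HasDerivAt (fun t : ℝ => K / 2 * t ^ 2) (K * t) t := by
        have := (hasDerivAt_pow 2 t).const_mul (K / 2)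
        convert this using 1
        all_goals try rfl
        ring
      exact ((hφ1 t).sub h2).sub h3
    have hanti : AntitoneOn χ (Set.Icc 0 1) := by
      apply antitoneOn_of_deriv_nonpos (convex_Icc 0 1)
      · exact fun t _ => (hχd t).continuousAt.continuousWithinAt
      · exact fun t _ => (hχd t).differentiableAt.differentiableWithinAt
      · intro t ht
        rw [interior_Icc] at ht
        rw [(hχd t).deriv]
        have := hLipφ2 t ht.1.le
        linarith
    intro t ht
    have := hanti (Set.left_mem_Icc.2 zero_le_one) ht ht.1
    simp only [hχdef, hγ0, zero_mul, mul_zero, sub_zero, ne_eq, OfNat.ofNat_ne_zero,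
      not_false_eq_true, zero_pow] at this
    linarith [this]
  -- second antitone step : Taylor bound
  have hTaylor : J (θ + h) ≤ J θ + ⟪gradient J θ, h⟫ + 1 / 2 * ⟪Hess θ h, h⟫ + K / 6 := by
    set ψ : ℝ → ℝ := fun t => J (γ t) - t * ⟪gradient J θ, h⟫
      - t ^ 2 / 2 * ⟪Hess θ h, h⟫ - K / 6 * t ^ 3 with hψdef
    have hψd : ∀ t, HasDerivAt ψ
        (⟪gradient J (γ t), h⟫ - ⟪gradient J θ, h⟫ - t * ⟪Hess θ h, h⟫ - K / 2 * t ^ 2) t := by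
      intro t
      have h2 : HasDerivAt (fun t : ℝ => t * ⟪gradient J θ, h⟫) ⟪gradient J θ, h⟫ t := by
        simpa using (hasDerivAt_id t).mul_const ⟪gradient J θ, h⟫
      have h3 : HasDerivAt (fun t : ℝ => t ^ 2 / 2 * ⟪Hess θ h, h⟫) (t * ⟪Hess θ h, h⟫) t := by
        have := ((hasDerivAt_pow 2 t).div_const 2).mul_const ⟪Hess θ h, h⟫
        convert this using 1
        all_goals try rfl
        ring
      have h4 : HasDerivAt (fun t : ℝ => K / 6 * t ^ 3) (K / 2 * t ^ 2) t := by
        have := (hasDerivAt_pow 3 t).const_mul (K / 6)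
        convert this using 1
        all_goals try rfl
        ring
      exact (((hφ t).sub h2).sub h3).sub h4
    have hanti : AntitoneOn ψ (Set.Icc 0 1) := by
      apply antitoneOn_of_deriv_nonpos (convex_Icc 0 1)
      · exact fun t _ => (hψd t).continuousAt.continuousWithinAt
      · exact fun t _ => (hψd t).differentiableAt.differentiableWithinAt
      · intro t ht
        rw [interior_Icc] at ht
        rw [(hψd t).deriv]
        have := hstep1 t ⟨ht.1.le, ht.2.le⟩
        linarith
    have := hanti (Set.left_mem_Icc.2 zero_le_one) (Set.right_mem_Icc.2 zero_le_one)
      zero_le_one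
    simp only [hψdef, hγ0, hγ1, one_pow, mul_one, one_mul, zero_mul, mul_zero, sub_zero,
      ne_eq, OfNat.ofNat_ne_zero, not_false_eq_true, zero_pow, zero_div] at this
    linarith [this]
  -- error bounds
  have hgerr : ⟪gradient J θ, h⟫ ≤ a + ε * r := by
    have h1 : ⟪gradient J θ, h⟫ - a = ⟪gradient J θ - g, h⟫ := by
      rw [inner_sub_left]
    have h2 : ⟪gradient J θ - g, h⟫ ≤ ‖gradient J θ - g‖ * ‖h‖ := real_inner_le_norm _ _
    have h3 : ‖gradient J θ - g‖ ≤ ε := by rwa [norm_sub_rev] at hg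
    have h4 : ‖gradient J θ - g‖ * ‖h‖ ≤ ε * r := by
      rw [← hrdef]; gcongr
    linarith
  have hHe : ⟪Hess θ h, h⟫ ≤ b + Real.sqrt (L₃ * ε) * r ^ 2 := by
    have h1 : ⟪Hess θ h, h⟫ - ⟪H h, h⟫ = ⟪(Hess θ - H) h, h⟫ := by
      rw [ContinuousLinearMap.sub_apply, inner_sub_left]
    have hb' : ⟪H h, h⟫ = b := real_inner_comm _ _
    have h2 : ⟪(Hess θ - H) h, h⟫ ≤ ‖(Hess θ - H) h‖ * ‖h‖ := real_inner_le_norm _ _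
    have h3 : ‖(Hess θ - H) h‖ * ‖h‖ ≤ Real.sqrt (L₃ * ε) * r ^ 2 := by
      have h4 : ‖(Hess θ - H) h‖ ≤ ‖Hess θ - H‖ * ‖h‖ := (Hess θ - H).le_opNorm h
      have h5 : ‖Hess θ - H‖ ≤ Real.sqrt (L₃ * ε) := by rwa [norm_sub_rev] at hHerr
      calc ‖(Hess θ - H) h‖ * ‖h‖ ≤ (Real.sqrt (L₃ * ε) * ‖h‖) * ‖h‖ := by
            apply mul_le_mul_of_nonneg_right _ (norm_nonneg h)
            exact h4.trans (mul_le_mul_of_nonneg_right h5 (norm_nonneg h))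
        _ = Real.sqrt (L₃ * ε) * r ^ 2 := by rw [← hrdef]; ring
    linarith
  -- algebraic facts about s
  have hεs : ε = L₃ * s ^ 2 := by
    rw [hsdef, Real.sq_sqrt (div_pos hε hL).le]
    field_simp
  have hsLε : Real.sqrt (L₃ * ε) = L₃ * s := by
    rw [hεs, show L₃ * (L₃ * s ^ 2) = (L₃ * s) ^ 2 by ring,
      Real.sqrt_sq (by positivity)]
  have hrhs : (7 / 24) * ε ^ ((3 : ℝ) / 2) / Real.sqrt L₃ = (7 / 24) * (L₃ * s ^ 3) := by
    have hL' : Real.sqrt L₃ ≠ 0 := by positivity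
    have hsqrteps : Real.sqrt ε = Real.sqrt L₃ * s := by
      rw [hεs, show L₃ * s ^ 2 = (Real.sqrt L₃ * s) ^ 2 by
        rw [mul_pow, Real.sq_sqrt hL.le], Real.sqrt_sq (by positivity)]
    have hpow : ε ^ ((3 : ℝ) / 2) = ε * Real.sqrt ε := by
      rw [show ((3 : ℝ) / 2) = 1 + 1 / 2 by norm_num, Real.rpow_add hε, Real.rpow_one,
        ← Real.sqrt_eq_rpow]
    rw [hpow, hsqrteps, hεs]
    exact aux_rhs L₃ s hL
  -- combine
  rw [hrhs]
  have hfinal : J θ - J (θ + h) ≥ (M / 4 - L₃ / 6) * r ^ 3 - L₃ * s ^ 2 * r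
      - 1 / 2 * (L₃ * s) * r ^ 2 := by
    have := hTaylor
    rw [hsLε] at hHe
    rw [hεs] at hgerr
    have hK : K = L₃ * r ^ 3 := hKdef
    nlinarith [hab]
  have key : 0 < L₃ * ((2 * r - s) * (88 * r ^ 2 + 38 * r * s + 7 * s ^ 2)) := by
    apply mul_pos hL
    apply mul_pos (by linarith) (by positivity)
  rw [hM] at hfinal
  nlinarith [hfinal, key]
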